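/- Let w ∈ L²(P⊗Q) and define u(x) := ∫w(x,y) dQ(y) - w̄/2 and v(y) := ∫w(x,y) dP(x) - w̄/2, where w̄ := ∫w d(P⊗Q). Then ∫u dP = ∫v dQ = w̄/2, and if moreover w = ũ ⊕ ṽ for some ũ ∈ L²(P), ṽ ∈ L²(Q) (i.e., w(x,y) = ũ(x) + ṽ(y) a.e.), then u ⊕ v = w a.e. and ‖u‖²_{L²(P)} + ‖v‖²_{L²(Q)} ≤ ‖w‖²_{L²(P⊗Q)}. -/

import Mathlib

open MeasureTheory

theorem stmt2 {α β : Type*} [MeasurableSpace α] [MeasurableSpace β]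
    (P : Measure α) (Q : Measure β)
    [IsProbabilityMeasure P] [IsProbabilityMeasure Q]
    (w : α × β → ℝ) (hw : MemLp w 2 (P.prod Q))
    (wbar : ℝ) (hwbar : wbar = ∫ z, w z ∂(P.prod Q))
    (u : α → ℝ) (hu : u = fun x => (∫ y, w (x, y) ∂Q) - wbar / 2)
    (v : β → ℝ) (hv : v = fun y => (∫ x, w (x, y) ∂P) - wbar / 2) :
    (∫ x, u x ∂P) = wbar / 2 ∧
    (∫ y, v y ∂Q) = wbar / 2 ∧
    ∀ ut : α → ℝ, ∀ vt : β → ℝ, MemLp ut 2 P → MemLp vt 2 Q →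
      (w =ᵐ[P.prod Q] fun z => ut z.1 + vt z.2) →
      ((fun z : α × β => u z.1 + v z.2) =ᵐ[P.prod Q] w) ∧
      (∫ x, (u x) ^ 2 ∂P) + (∫ y, (v y) ^ 2 ∂Q) ≤ ∫ z, (w z) ^ 2 ∂(P.prod Q) := by
  have hwInt : Integrable w (P.prod Q) := hw.integrable one_le_two
  have h1 : Integrable (fun x => ∫ y, w (x, y) ∂Q) P := hwInt.integral_prod_left
  have h2 : Integrable (fun y => ∫ x, w (x, y) ∂P) Q := hwInt.integral_prod_right
  have hiu : (∫ x, u x ∂P) = wbar / 2 := by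
    rw [hu, integral_sub h1 (integrable_const _), integral_const]
    simp [← MeasureTheory.integral_prod w hwInt, ← hwbar]
    ring
  have hiv : (∫ y, v y ∂Q) = wbar / 2 := by
    rw [hv, integral_sub h2 (integrable_const _), integral_const]
    rw [MeasureTheory.integral_prod_symm w hwInt] at hwbar
    simp [← hwbar]
    ring
  refine ⟨hiu, hiv, fun ut vt hut hvt hae => ?_⟩
  have hutI : Integrable ut P := hut.integrable one_le_two
  have hvtI : Integrable vt Q := hvt.integrable one_le_two
  -- a.e. pointwise identities for u and v
  have haeP : ∀ᵐ x ∂P, ∀ᵐ y ∂Q, w (x, y) = ut x + vt y :=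
    Measure.ae_ae_of_ae_prod hae
  have hu' : u =ᵐ[P] fun x => ut x + ((∫ y, vt y ∂Q) - wbar / 2) := by
    rw [hu]
    filter_upwards [haeP] with x hx
    rw [integral_congr_ae hx, integral_add (integrable_const _) hvtI, integral_const]
    simp
    ring
  have haeswap : (fun z : β × α => w z.swap) =ᵐ[Q.prod P]
      (fun z : β × α => ut z.2 + vt z.1) :=
    hae.comp_tendsto (Measure.measurePreserving_swap (μ := Q) (ν := P)).quasiMeasurePreserving.tendsto_ae
  have haeQ : ∀ᵐ y ∂Q, ∀ᵐ x ∂P, w (x, y) = ut x + vt y :=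
    Measure.ae_ae_of_ae_prod haeswap
  have hv' : v =ᵐ[Q] fun y => vt y + ((∫ x, ut x ∂P) - wbar / 2) := by
    rw [hv]
    filter_upwards [haeQ] with y hy
    rw [integral_congr_ae hy, integral_add hutI (integrable_const _), integral_const]
    simp
    ring
  have hbar : wbar = (∫ x, ut x ∂P) + (∫ y, vt y ∂Q) := by
    rw [hwbar, integral_congr_ae hae, MeasureTheory.integral_prod _ ?_]
    · have : ∀ x, (∫ y, ut x + vt y ∂Q) = ut x + ∫ y, vt y ∂Q := by
        intro x
        rw [integral_add (integrable_const _) hvtI, integral_const]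
        simp
      simp only [this]
      rw [integral_add hutI (integrable_const _), integral_const]
      simp
    · exact (integrable_congr hae).mp hwInt
  -- first conclusion
  have huprod : (fun z : α × β => u z.1) =ᵐ[P.prod Q]
      (fun z => ut z.1 + ((∫ y, vt y ∂Q) - wbar / 2)) :=
    hu'.comp_tendsto Measure.quasiMeasurePreserving_fst.tendsto_ae
  have hvprod : (fun z : α × β => v z.2) =ᵐ[P.prod Q]
      (fun z => vt z.2 + ((∫ x, ut x ∂P) - wbar / 2)) :=
    hv'.comp_tendsto Measure.quasiMeasurePreserving_snd.tendsto_ae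
  have hkey : (fun z : α × β => u z.1 + v z.2) =ᵐ[P.prod Q] w := by
    filter_upwards [huprod, hvprod, hae] with z h1 h2 h3
    simp only [h1, h2, h3]
    rw [hbar]
    ring
  refine ⟨hkey, ?_⟩
  -- L² memberships
  have huL2 : MemLp u 2 P :=
    (hut.add (memLp_const _)).ae_eq hu'.symm
  have hvL2 : MemLp v 2 Q :=
    (hvt.add (memLp_const _)).ae_eq hv'.symm
  have hu2 : Integrable (fun x => u x ^ 2) P := huL2.integrable_sq
  have hv2 : Integrable (fun y => v y ^ 2) Q := hvL2.integrable_sq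
  have huI : Integrable u P := huL2.integrable one_le_two
  have hvI : Integrable v Q := hvL2.integrable one_le_two
  -- expand the square integral
  have hsq : (∫ z, (w z) ^ 2 ∂(P.prod Q)) =
      (∫ x, (u x) ^ 2 ∂P) + (∫ y, (v y) ^ 2 ∂Q)
      + 2 * ((∫ x, u x ∂P) * (∫ y, v y ∂Q)) := by
    have hcongr : (fun z : α × β => (w z) ^ 2) =ᵐ[P.prod Q]
        (fun z => u z.1 ^ 2 + v z.2 ^ 2 + 2 * (u z.1 * v z.2)) := by
      filter_upwards [hkey] with z hz
      rw [← hz]; ring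
    rw [integral_congr_ae hcongr]
    have i1 : Integrable (fun z : α × β => u z.1 ^ 2) (P.prod Q) := by
      have := hu2.mul_prod (integrable_const (1 : ℝ)) (ν := Q)
      simpa using this
    have i2 : Integrable (fun z : α × β => v z.2 ^ 2) (P.prod Q) := by
      have := (integrable_const (1 : ℝ) (μ := P)).mul_prod hv2
      simpa using this
    have i3 : Integrable (fun z : α × β => u z.1 * v z.2) (P.prod Q) :=
      huI.mul_prod hvI
    have expand := integral_add (μ := P.prod Q)
      (f := fun z : α × β => u z.1 ^ 2 + v z.2 ^ 2)
      (g := fun z : α × β => 2 * (u z.1 * v z.2)) (i1.add i2) (i3.const_mul 2)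
    have expand2 := integral_add (μ := P.prod Q)
      (f := fun z : α × β => u z.1 ^ 2)
      (g := fun z : α × β => v z.2 ^ 2) i1 i2
    rw [expand, expand2]
    simp only [integral_const_mul, integral_prod_mul]
    have e1 : (∫ z : α × β, u z.1 ^ 2 ∂(P.prod Q)) = ∫ x, u x ^ 2 ∂P := by
      have := integral_prod_mul (μ := P) (ν := Q) (fun x => u x ^ 2) (fun _ => (1 : ℝ))
      simpa using this
    have e2 : (∫ z : α × β, v z.2 ^ 2 ∂(P.prod Q)) = ∫ y, v y ^ 2 ∂Q := by
      have := integral_prod_mul (μ := P) (ν := Q) (fun _ => (1 : ℝ)) (fun y => v y ^ 2)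
      simpa using this
    rw [e1, e2]
  rw [hsq, hiu, hiv]
  nlinarith [sq_nonneg wbar]
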